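/- Assume k contains a primitive n-th root of unity and char k does not divide n. Let ψ̄ ∈ Sp(K(n)) and let {v₁,…,v_{2g}} be a ℤ/nℤ-basis of K(n) (every element of K(n) is uniquely a sum ∑ a_k·v_k with a_k ∈ ℤ/nℤ). For each k set B_k := ψ̄(v_k)₂(ψ̄(v_k)₁) and b_k := (v_k)₂((v_k)₁); both are n-th roots of unity. Given t₁,…,t_{2g} ∈ kˣ, there exists a ψ̄-semi-character χ with χ(v_k) = t_k for all k if and only if t_k^n = (B_k·b_k)^{n/2} for all k when n is even, and t_k^n = 1 for all k when n is odd; moreover such χ is unique, and conversely the values χ(v_k) of any ψ̄-semi-character satisfy these conditions. (For the canonical basis of K(n) one has b_k = 1, recovering the condition t_k^n = B_k^{n/2} stated in the paper.) -/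

import Mathlib

namespace ThetaPaper

variable {g n : ℕ} {k : Type*} [Field k]

/-- `Z(n) = (ℤ/nℤ)^g`. -/
abbrev ZGrp (g n : ℕ) := Fin g → ZMod n

/-- `Ẑ(n) = Hom(Z(n), kˣ)`, the group of `kˣ`-valued characters of `Z(n)`,
written additively. -/
abbrev ZHat (g n : ℕ) (k : Type*) [Field k] := AddChar (ZGrp g n) kˣ

/-- `K(n) = Z(n) × Ẑ(n)`. -/
abbrev KGrp (g n : ℕ) (k : Type*) [Field k] := ZGrp g n × ZHat g n k

/-- The commutator pairing `e_n((x₁,y₁),(x₂,y₂)) = y₁(x₂)·y₂(x₁)⁻¹`. -/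
def en (v w : KGrp g n k) : kˣ := v.2 w.1 * (w.2 v.1)⁻¹

/-- The level-`n` Heisenberg group `G(n)`, as the set `kˣ × Z(n) × Ẑ(n)`. -/
@[ext]
structure Heis (g n : ℕ) (k : Type*) [Field k] where
  t : kˣ
  x : ZGrp g n
  y : ZHat g n k

namespace Heis

/-- The Heisenberg multiplication
`(α₁,x₁,y₁)·(α₂,x₂,y₂) = (α₁α₂·y₂(x₁), x₁+x₂, y₁+y₂)`. -/
instance : Mul (Heis g n k) :=
  ⟨fun a b => ⟨a.t * b.t * b.y a.x, a.x + b.x, a.y + b.y⟩⟩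

instance : One (Heis g n k) := ⟨⟨1, 0, 0⟩⟩

instance : Inv (Heis g n k) :=
  ⟨fun a => ⟨a.t⁻¹ * a.y a.x, -a.x, -a.y⟩⟩

@[simp] lemma mul_t (a b : Heis g n k) : (a * b).t = a.t * b.t * b.y a.x := rfl
@[simp] lemma mul_x (a b : Heis g n k) : (a * b).x = a.x + b.x := rfl
@[simp] lemma mul_y (a b : Heis g n k) : (a * b).y = a.y + b.y := rfl
@[simp] lemma one_t : (1 : Heis g n k).t = 1 := rfl
@[simp] lemma one_x : (1 : Heis g n k).x = 0 := rfl
@[simp] lemma one_y : (1 : Heis g n k).y = 0 := rfl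
@[simp] lemma inv_t (a : Heis g n k) : a⁻¹.t = a.t⁻¹ * a.y a.x := rfl
@[simp] lemma inv_x (a : Heis g n k) : a⁻¹.x = -a.x := rfl
@[simp] lemma inv_y (a : Heis g n k) : a⁻¹.y = -a.y := rfl

instance : Group (Heis g n k) :=
  Group.ofLeftAxioms
    (fun a b c => by
      ext <;>
        simp [AddChar.map_add_eq_mul, mul_assoc, mul_comm, mul_left_comm, add_assoc])
    (fun a => by ext <;> simp)
    (fun a => by
      ext <;> simp [AddChar.map_neg_eq_inv, mul_comm, mul_left_comm, mul_assoc])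

/-- The canonical projection `π : G(n) → K(n)`, `(α,x,y) ↦ (x,y)`. -/
def toK (h : Heis g n k) : KGrp g n k := (h.x, h.y)

/-- The automorphism `D₋₁ : (α,x,y) ↦ (α,−x,−y)`. -/
def Dneg (h : Heis g n k) : Heis g n k := ⟨h.t, -h.x, -h.y⟩

/-- A symmetric element of the Heisenberg group: `D₋₁(h) = h⁻¹`. -/
def IsSymElem (h : Heis g n k) : Prop := Dneg h = h⁻¹

end Heis

/-- The `ψ`-semi-character identity:
`χ(v+w) = χ(v)·χ(w)·[ψ(w)₂(ψ(v)₁)]·[w₂(v₁)]⁻¹`. -/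
def IsSemiChar (ψ : KGrp g n k → KGrp g n k) (χ : KGrp g n k → kˣ) : Prop :=
  ∀ v w : KGrp g n k,
    χ (v + w) = χ v * χ w * (ψ w).2 (ψ v).1 * ((w.2 v.1)⁻¹ : kˣ)

/-- A symmetric (semi-)character: `χ(−v) = χ(v)`. -/
def IsSymmChar (χ : KGrp g n k → kˣ) : Prop := ∀ v : KGrp g n k, χ (-v) = χ v

/-- `ψ̄ ∈ Sp(K(n))`: an additive automorphism preserving the pairing `e_n`. -/
def IsSymplectic (ψ : KGrp g n k ≃+ KGrp g n k) : Prop :=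
  ∀ v w : KGrp g n k, en (ψ v) (ψ w) = en v w


/-! Auxiliary pairing and cocycle -/

/-- `P1 v w = w₂(v₁)`. -/
def P1 (v w : KGrp g n k) : kˣ := w.2 v.1

/-- the cocycle `F(v,w) = ψ(w)₂(ψ(v)₁) · (w₂(v₁))⁻¹`. -/
def Fc (ψ : KGrp g n k → KGrp g n k) (v w : KGrp g n k) : kˣ :=
  P1 (ψ v) (ψ w) * (P1 v w)⁻¹

lemma P1_add_left (v v' w : KGrp g n k) : P1 (v + v') w = P1 v w * P1 v' w :=
  AddChar.map_add_eq_mul w.2 v.1 v'.1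

lemma P1_add_right (v w w' : KGrp g n k) : P1 v (w + w') = P1 v w * P1 v w' := rfl

lemma P1_zero_left (w : KGrp g n k) : P1 0 w = 1 := AddChar.map_zero_eq_one w.2

lemma P1_zero_right (v : KGrp g n k) : P1 v 0 = 1 := rfl

lemma K_torsion (u : KGrp g n k) : n • u = 0 := by
  have hz : ∀ x : ZGrp g n, n • x = 0 := by
    intro x; funext j; show n • (x j) = 0; simp [nsmul_eq_mul]
  have h1 : (n • u).1 = (0 : KGrp g n k).1 := hz u.1
  have h2 : (n • u).2 = (0 : KGrp g n k).2 := by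
    have h : ∀ x, ((n • u).2) x = ((0 : KGrp g n k).2) x := by
      intro x
      show (u.2 x) ^ n = 1
      rw [← AddChar.map_nsmul_eq_pow, hz, AddChar.map_zero_eq_one]
    exact DFunLike.ext _ _ h
  exact Prod.ext h1 h2

lemma smul_mod (m : ℕ) (u : KGrp g n k) : (m % n) • u = m • u := by
  have h1 : m • u = (n * (m / n) + m % n) • u := by
    rw [Nat.div_add_mod]
  have h2 : (n * (m / n) + m % n) • u = (n * (m / n)) • u + (m % n) • u := add_nsmul u _ _
  have h3 : (n * (m / n)) • u = (m / n) • (n • u) := mul_nsmul u n (m / n)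
  have h4 : (m / n) • (n • u) = (0 : KGrp g n k) := by rw [K_torsion]; exact nsmul_zero (M := KGrp g n k) _
  have h5 : (0 : KGrp g n k) + (m % n) • u = (m % n) • u := zero_add ((m % n) • u)
  rw [h1, h2, h3, h4, h5]

lemma P1_nsmul_left (m : ℕ) (v w : KGrp g n k) : P1 (m • v) w = P1 v w ^ m := by
  induction m with
  | zero =>
    have h0 : (0 : ℕ) • v = (0 : KGrp g n k) := zero_nsmul v
    rw [h0, P1_zero_left, pow_zero]
  | succ m ih =>
    have hs : (m + 1) • v = m • v + v := succ_nsmul v m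
    rw [hs, P1_add_left, ih, pow_succ]

lemma P1_pow_n (v w : KGrp g n k) : P1 v w ^ n = 1 := by
  rw [← P1_nsmul_left, K_torsion, P1_zero_left]

variable (ψ : KGrp g n k ≃+ KGrp g n k)

lemma Fc_add_left (v v' w : KGrp g n k) : Fc (⇑ψ) (v + v') w = Fc (⇑ψ) v w * Fc (⇑ψ) v' w := by
  unfold Fc
  have h : ψ (v + v') = ψ v + ψ v' := map_add ψ v v'
  rw [h, P1_add_left, P1_add_left, mul_inv]
  exact mul_mul_mul_comm _ _ _ _

lemma Fc_add_right (v w w' : KGrp g n k) : Fc (⇑ψ) v (w + w') = Fc (⇑ψ) v w * Fc (⇑ψ) v w' := by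
  unfold Fc
  have h : ψ (w + w') = ψ w + ψ w' := map_add ψ w w'
  rw [h, P1_add_right, P1_add_right, mul_inv]
  exact mul_mul_mul_comm _ _ _ _

lemma Fc_zero_left (w : KGrp g n k) : Fc (⇑ψ) 0 w = 1 := by
  unfold Fc
  have h : ψ 0 = 0 := map_zero ψ
  rw [h, P1_zero_left, P1_zero_left]
  simp

lemma Fc_zero_right (v : KGrp g n k) : Fc (⇑ψ) v 0 = 1 := by
  unfold Fc
  have h : ψ 0 = 0 := map_zero ψ
  rw [h, P1_zero_right, P1_zero_right]
  simp

lemma Fc_nsmul_left (m : ℕ) (v w : KGrp g n k) : Fc (⇑ψ) (m • v) w = Fc (⇑ψ) v w ^ m := by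
  induction m with
  | zero =>
    have h0 : (0 : ℕ) • v = (0 : KGrp g n k) := zero_nsmul v
    rw [h0, Fc_zero_left, pow_zero]
  | succ m ih =>
    have hs : (m + 1) • v = m • v + v := succ_nsmul v m
    rw [hs, Fc_add_left, ih, pow_succ]

lemma Fc_nsmul_right (m : ℕ) (v w : KGrp g n k) : Fc (⇑ψ) v (m • w) = Fc (⇑ψ) v w ^ m := by
  induction m with
  | zero =>
    have h0 : (0 : ℕ) • w = (0 : KGrp g n k) := zero_nsmul w
    rw [h0, Fc_zero_right, pow_zero]
  | succ m ih =>
    have hs : (m + 1) • w = m • w + w := succ_nsmul w m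
    rw [hs, Fc_add_right, ih, pow_succ]

lemma Fc_pow_n (v w : KGrp g n k) : Fc (⇑ψ) v w ^ n = 1 := by
  rw [← Fc_nsmul_left, K_torsion, Fc_zero_left]

lemma Fc_symm (hψ : IsSymplectic ψ) (v w : KGrp g n k) : Fc (⇑ψ) v w = Fc (⇑ψ) w v := by
  have h2 : P1 (ψ w) (ψ v) * (P1 (ψ v) (ψ w))⁻¹ = P1 w v * (P1 v w)⁻¹ := hψ v w
  have h3 : P1 (ψ w) (ψ v) = P1 w v * (P1 v w)⁻¹ * P1 (ψ v) (ψ w) :=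
    mul_inv_eq_iff_eq_mul.mp h2
  unfold Fc
  rw [h3]
  generalize P1 (ψ v) (ψ w) = A
  generalize P1 w v = B
  generalize P1 v w = C
  simp [mul_assoc, mul_comm, mul_left_comm, mul_inv_cancel_left, inv_mul_cancel_left]

lemma Fc_sum_left {ι : Type*} (s : Finset ι) (x : ι → KGrp g n k) (w : KGrp g n k) :
    Fc (⇑ψ) (∑ i ∈ s, x i) w = ∏ i ∈ s, Fc (⇑ψ) (x i) w := by
  induction s using Finset.cons_induction with
  | empty =>
    have h : (∑ i ∈ (∅ : Finset ι), x i) = (0 : KGrp g n k) := Finset.sum_empty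
    rw [h, Fc_zero_left, Finset.prod_empty]
  | cons a s ha ih =>
    have h : (∑ i ∈ Finset.cons a s ha, x i) = x a + ∑ i ∈ s, x i := Finset.sum_cons ha
    rw [h, Fc_add_left, ih, Finset.prod_cons]

lemma Fc_sum_right {ι : Type*} (s : Finset ι) (x : ι → KGrp g n k) (v : KGrp g n k) :
    Fc (⇑ψ) v (∑ i ∈ s, x i) = ∏ i ∈ s, Fc (⇑ψ) v (x i) := by
  induction s using Finset.cons_induction with
  | empty =>
    have h : (∑ i ∈ (∅ : Finset ι), x i) = (0 : KGrp g n k) := Finset.sum_empty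
    rw [h, Fc_zero_right, Finset.prod_empty]
  | cons a s ha ih =>
    have h : (∑ i ∈ Finset.cons a s ha, x i) = x a + ∑ i ∈ s, x i := Finset.sum_cons ha
    rw [h, Fc_add_right, ih, Finset.prod_cons]

/-! Nat combinatorics -/

lemma add_choose_two (s u : ℕ) : (s + u).choose 2 = s.choose 2 + u.choose 2 + s * u := by
  induction u with
  | zero => simp
  | succ u ih =>
    have h1 : (s + (u + 1)).choose 2 = (s + u).choose 2 + (s + u) := by
      rw [← Nat.add_assoc]
      rw [Nat.choose_succ_succ (s + u) 1, Nat.choose_one_right, Nat.add_comm]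
    have h2 : (u + 1).choose 2 = u.choose 2 + u := by
      rw [Nat.choose_succ_succ u 1, Nat.choose_one_right, Nat.add_comm]
    rw [h1, ih, h2]
    ring

lemma two_mul_choose_two (m : ℕ) : 2 * m.choose 2 = m * (m - 1) := by
  rw [Nat.choose_two_right, Nat.mul_div_cancel']
  exact (Nat.even_mul_pred_self m).two_dvd

/-- key computation : for `n`-th roots of unity `B`, `b`,
`(B·b⁻¹)^(n choose 2)` equals `(B·b)^(n/2)` when `n` is even and `1` otherwise. -/
lemma cond_eq {B b : kˣ} (hB : B ^ n = 1) (hb : b ^ n = 1) :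
    (if Even n then (B * b) ^ (n / 2) else 1) = (B * b⁻¹) ^ n.choose 2 := by
  have hBb : (B * b⁻¹) ^ n = 1 := by
    rw [mul_pow, inv_pow, hB, hb]; simp
  by_cases hev : Even n
  · rw [if_pos hev]
    obtain ⟨m, hm⟩ := hev
    rcases Nat.eq_zero_or_pos n with h0 | hpos
    · subst h0
      have hm0 : m = 0 := by omega
      subst hm0
      simp
    have hn2 : n / 2 = m := by omega
    have hch : n.choose 2 = m * (n - 1) := by
      have h2 := two_mul_choose_two n
      rw [hm] at h2
      have h3 : (m + m) * (m + m - 1) = 2 * (m * (m + m - 1)) := by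
        rw [Nat.add_mul, Nat.two_mul]
      rw [hm]
      exact Nat.eq_of_mul_eq_mul_left two_pos (h2.trans h3)
    rw [hn2, hch]
    set d : kˣ := (B * b⁻¹) ^ m with hd_def
    have hd : d ^ n = 1 := by
      rw [hd_def, ← pow_mul, mul_comm m n, pow_mul, hBb, one_pow]
    have hdn1 : d ^ (n - 1) = d⁻¹ := by
      refine eq_inv_of_mul_eq_one_left ?_
      rw [← pow_succ, Nat.sub_add_cancel hpos, hd]
    have hdinv : d⁻¹ = (B⁻¹) ^ m * b ^ m := by
      rw [hd_def, ← inv_pow, mul_inv, inv_inv, mul_pow]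
    have hBm : B ^ m = (B⁻¹) ^ m := by
      rw [inv_pow]
      refine eq_inv_of_mul_eq_one_left ?_
      rw [← pow_add]
      have : m + m = n := by omega
      rw [this, hB]
    calc (B * b) ^ m = B ^ m * b ^ m := mul_pow B b m
      _ = (B⁻¹) ^ m * b ^ m := by rw [hBm]
      _ = d⁻¹ := hdinv.symm
      _ = d ^ (n - 1) := hdn1.symm
      _ = ((B * b⁻¹) ^ m) ^ (n - 1) := rfl
      _ = (B * b⁻¹) ^ (m * (n - 1)) := (pow_mul _ _ _).symm
  · rw [if_neg hev]
    obtain ⟨m, hm⟩ := Nat.not_even_iff_odd.mp hev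
    have hch : n.choose 2 = n * m := by
      have h2 := two_mul_choose_two n
      have h4 : n - 1 = 2 * m := by omega
      rw [h4] at h2
      have h3 : n * (2 * m) = 2 * (n * m) := by ring
      exact Nat.eq_of_mul_eq_mul_left two_pos (h2.trans h3)
    rw [hch, pow_mul, hBb, one_pow]

/-! Semicharacter basics -/

section SemiChar
variable {ψ : KGrp g n k ≃+ KGrp g n k} {χ : KGrp g n k → kˣ}

lemma semi_Fc (h : IsSemiChar (⇑ψ) χ) (v w : KGrp g n k) :
    χ (v + w) = χ v * χ w * Fc (⇑ψ) v w := by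
  rw [h v w, Fc, mul_assoc]
  rfl

lemma semi_zero (h : IsSemiChar (⇑ψ) χ) : χ 0 = 1 := by
  have hz : ∀ z : KGrp g n k, (0 : KGrp g n k) + z = z := fun z => zero_add z
  have h0 : (0 : KGrp g n k) + 0 = 0 := hz 0
  have := semi_Fc h 0 0
  rw [h0, Fc_zero_left, mul_one] at this
  have h2 : χ 0 * 1 = χ 0 * χ 0 := by rw [mul_one]; exact this
  exact (mul_left_cancel h2).symm

lemma semi_nsmul (h : IsSemiChar (⇑ψ) χ) (m : ℕ) (x : KGrp g n k) :
    χ (m • x) = χ x ^ m * Fc (⇑ψ) x x ^ (m.choose 2) := by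
  induction m with
  | zero =>
    have h0 : (0 : ℕ) • x = (0 : KGrp g n k) := zero_nsmul x
    rw [h0, semi_zero h]
    simp
  | succ m ih =>
    have hs : (m + 1) • x = m • x + x := succ_nsmul x m
    have hch : (m + 1).choose 2 = m.choose 2 + m := by
      rw [Nat.choose_succ_succ m 1, Nat.choose_one_right, Nat.add_comm]
    rw [hs, semi_Fc h, ih, Fc_nsmul_left, hch, pow_succ, pow_add, mul_assoc]
    exact mul_mul_mul_comm _ _ _ _

lemma semi_pow_n (h : IsSemiChar (⇑ψ) χ) (x : KGrp g n k) :
    χ x ^ n = Fc (⇑ψ) x x ^ (n.choose 2) := by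
  have h1 := semi_nsmul h n x
  rw [K_torsion, semi_zero h] at h1
  have hsq : Fc (⇑ψ) x x ^ n.choose 2 * Fc (⇑ψ) x x ^ n.choose 2 = 1 := by
    rw [← pow_add, ← two_mul, two_mul_choose_two, pow_mul, Fc_pow_n, one_pow]
  -- 1 = χ x ^ n * c ^ (n.choose 2)
  calc χ x ^ n = χ x ^ n * (Fc (⇑ψ) x x ^ n.choose 2 * Fc (⇑ψ) x x ^ n.choose 2) := by
        rw [hsq, mul_one]
    _ = (χ x ^ n * Fc (⇑ψ) x x ^ n.choose 2) * Fc (⇑ψ) x x ^ n.choose 2 := by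
        rw [mul_assoc]
    _ = Fc (⇑ψ) x x ^ n.choose 2 := by rw [← h1, one_mul]

/-- The necessity statement, for any `x`. -/
lemma semi_values (h : IsSemiChar (⇑ψ) χ) (x : KGrp g n k) :
    χ x ^ n = if Even n then ((ψ x).2 (ψ x).1 * x.2 x.1) ^ (n / 2) else 1 := by
  have hB : P1 (ψ x) (ψ x) ^ n = 1 := P1_pow_n _ _
  have hb : P1 x x ^ n = 1 := P1_pow_n _ _
  have hc := cond_eq hB hb
  rw [semi_pow_n h]
  exact hc.symm

end SemiChar

/-! Square split -/

/-- upper triangle -/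
def Tlt (N : ℕ) : Finset (Fin N × Fin N) := Finset.univ.filter (fun p => p.1 < p.2)

lemma square_split (N : ℕ) (G : Fin N → Fin N → kˣ) :
    ∏ i, ∏ j, G i j =
      ((∏ i, G i i) *
        ∏ p ∈ Tlt N, G p.1 p.2) *
        ∏ p ∈ Tlt N, G p.2 p.1 := by
  classical
  show _ = ((∏ i, G i i) *
        ∏ p ∈ Finset.univ.filter (fun p : Fin N × Fin N => p.1 < p.2), G p.1 p.2) *
        ∏ p ∈ Finset.univ.filter (fun p : Fin N × Fin N => p.1 < p.2), G p.2 p.1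
  have h0 : ∏ i, ∏ j, G i j = ∏ p ∈ (Finset.univ : Finset (Fin N × Fin N)), G p.1 p.2 := by
    rw [← Finset.univ_product_univ, Finset.prod_product']
  rw [h0, ← Finset.prod_filter_mul_prod_filter_not Finset.univ
    (fun p : Fin N × Fin N => p.1 < p.2) (fun p => G p.1 p.2),
    ← Finset.prod_filter_mul_prod_filter_not
      (Finset.univ.filter (fun p : Fin N × Fin N => ¬ p.1 < p.2))
      (fun p : Fin N × Fin N => p.1 = p.2) (fun p => G p.1 p.2)]
  have hdiagset :
      (Finset.univ.filter (fun p : Fin N × Fin N => ¬ p.1 < p.2)).filter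
        (fun p : Fin N × Fin N => p.1 = p.2) =
      Finset.univ.filter (fun p : Fin N × Fin N => p.1 = p.2) := by
    rw [Finset.filter_filter]
    apply Finset.filter_congr
    intro p _
    constructor
    · rintro ⟨_, h⟩; exact h
    · intro h; exact ⟨by omega, h⟩
  have hgtset :
      (Finset.univ.filter (fun p : Fin N × Fin N => ¬ p.1 < p.2)).filter
        (fun p : Fin N × Fin N => ¬ p.1 = p.2) =
      Finset.univ.filter (fun p : Fin N × Fin N => p.2 < p.1) := by
    rw [Finset.filter_filter]
    apply Finset.filter_congr
    intro p _
    constructor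
    · rintro ⟨h1, h2⟩
      rcases lt_trichotomy p.1 p.2 with h | h | h
      · exact absurd h h1
      · exact absurd h h2
      · exact h
    · intro h; exact ⟨by omega, by omega⟩
  rw [hdiagset, hgtset]
  have hdiag : ∏ p ∈ Finset.univ.filter (fun p : Fin N × Fin N => p.1 = p.2), G p.1 p.2
      = ∏ i, G i i := by
    refine Finset.prod_nbij' (fun p => p.1) (fun i => (i, i)) ?_ ?_ ?_ ?_ ?_
    · intro p _; exact Finset.mem_univ _
    · intro i _; simp
    · intro p hp
      simp only [Finset.mem_filter] at hp
      exact Prod.ext rfl hp.2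
    · intro i _; rfl
    · intro p hp
      simp only [Finset.mem_filter] at hp
      rw [← hp.2]
  have hswap : ∏ p ∈ Finset.univ.filter (fun p : Fin N × Fin N => p.2 < p.1), G p.1 p.2
      = ∏ p ∈ Finset.univ.filter (fun p : Fin N × Fin N => p.1 < p.2), G p.2 p.1 := by
    refine Finset.prod_nbij' (fun p => (p.2, p.1)) (fun p => (p.2, p.1)) ?_ ?_ ?_ ?_ ?_
    · intro p hp; simp only [Finset.mem_filter] at hp ⊢; exact ⟨Finset.mem_univ _, hp.2⟩
    · intro p hp; simp only [Finset.mem_filter] at hp ⊢; exact ⟨Finset.mem_univ _, hp.2⟩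
    · intro p _; rfl
    · intro p _; rfl
    · intro p _; rfl
  rw [hdiag, hswap]
  generalize (∏ p ∈ Finset.univ.filter (fun p : Fin N × Fin N => p.1 < p.2), G p.1 p.2) = X
  generalize (∏ p ∈ Finset.univ.filter (fun p : Fin N × Fin N => p.1 < p.2), G p.2 p.1) = Z
  generalize (∏ i, G i i) = D
  rw [mul_left_comm, mul_assoc]

/-! The rank-one building block -/

lemma phi_cocycle [NeZero n] {c tt : kˣ} (hc : c ^ n = 1) (ht : tt ^ n = c ^ n.choose 2)
    (a b : ZMod n) :
    tt ^ (a + b).val * c ^ ((a + b).val.choose 2) =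
      (tt ^ a.val * c ^ a.val.choose 2) * (tt ^ b.val * c ^ b.val.choose 2) *
        c ^ (a.val * b.val) := by
  have hR : (tt ^ a.val * c ^ a.val.choose 2) * (tt ^ b.val * c ^ b.val.choose 2) *
      c ^ (a.val * b.val) = tt ^ (a.val + b.val) * c ^ ((a.val + b.val).choose 2) := by
    rw [add_choose_two, pow_add tt, pow_add c, pow_add c]
    generalize tt ^ a.val = T1
    generalize tt ^ b.val = T2
    generalize c ^ a.val.choose 2 = C1
    generalize c ^ b.val.choose 2 = C2
    generalize c ^ (a.val * b.val) = C3
    rw [mul_mul_mul_comm T1 C1 T2 C2, mul_assoc (T1 * T2)]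
  have hv : (a + b).val = (a.val + b.val) % n := ZMod.val_add a b
  by_cases hlt : a.val + b.val < n
  · rw [hv, Nat.mod_eq_of_lt hlt, hR]
  · push_neg at hlt
    have hsn : a.val < n := ZMod.val_lt a
    have hun : b.val < n := ZMod.val_lt b
    set m := a.val + b.val - n with hm_def
    have hmod : (a.val + b.val) % n = m := by
      rw [Nat.mod_eq_sub_mod hlt, Nat.mod_eq_of_lt (by omega)]
    have hmn : a.val + b.val = m + n := by omega
    have hkey : tt ^ n * (c ^ n.choose 2 * c ^ (m * n)) = 1 := by
      rw [ht, ← pow_add, ← pow_add]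
      have h2 : n.choose 2 + (n.choose 2 + m * n) = 2 * n.choose 2 + m * n := by ring
      rw [h2, two_mul_choose_two, pow_add, pow_mul, hc, one_pow, one_mul, mul_comm m n,
        pow_mul, hc, one_pow]
    rw [hv, hmod, hR, hmn, pow_add tt, add_choose_two, pow_add c, pow_add c]
    generalize tt ^ m = T1
    generalize c ^ m.choose 2 = C1
    rw [mul_assoc C1, mul_mul_mul_comm T1 (tt ^ n) C1, hkey, mul_one]

/-! Uniqueness -/

lemma semi_unique {ψ : KGrp g n k ≃+ KGrp g n k} {χ₁ χ₂ : KGrp g n k → kˣ}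
    (h1 : IsSemiChar (⇑ψ) χ₁) (h2 : IsSemiChar (⇑ψ) χ₂) {N : ℕ} {v : Fin N → KGrp g n k}
    (hsurj : Function.Surjective fun a : Fin N → ZMod n => ∑ i, (a i).val • v i)
    (heq : ∀ i, χ₁ (v i) = χ₂ (v i)) : χ₁ = χ₂ := by
  set r : KGrp g n k → kˣ := fun x => χ₁ x * (χ₂ x)⁻¹ with hr
  have r_add : ∀ x y : KGrp g n k, r (x + y) = r x * r y := by
    intro x y
    show χ₁ (x + y) * (χ₂ (x + y))⁻¹ = χ₁ x * (χ₂ x)⁻¹ * (χ₁ y * (χ₂ y)⁻¹)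
    rw [semi_Fc h1, semi_Fc h2]
    generalize χ₁ x = A; generalize χ₁ y = B
    generalize χ₂ x = C; generalize χ₂ y = D
    generalize Fc (⇑ψ) x y = F
    rw [mul_inv (C * D) F, mul_inv C D, mul_mul_mul_comm (A * B) F,
      mul_inv_cancel, mul_one, mul_mul_mul_comm A B]
  have r_zero : r 0 = 1 := by
    show χ₁ 0 * (χ₂ 0)⁻¹ = 1
    rw [semi_zero h1, semi_zero h2, inv_one, mul_one]
  have r_nsmul : ∀ (m : ℕ) (x : KGrp g n k), r (m • x) = r x ^ m := by
    intro m x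
    induction m with
    | zero =>
      have h0 : (0 : ℕ) • x = (0 : KGrp g n k) := zero_nsmul x
      rw [h0, r_zero, pow_zero]
    | succ m ih =>
      have hs : (m + 1) • x = m • x + x := succ_nsmul x m
      rw [hs, r_add, ih, pow_succ]
  have r_sum : ∀ (s : Finset (Fin N)) (x : Fin N → KGrp g n k),
      r (∑ i ∈ s, x i) = ∏ i ∈ s, r (x i) := by
    intro s x
    induction s using Finset.cons_induction with
    | empty =>
      have h : (∑ i ∈ (∅ : Finset (Fin N)), x i) = (0 : KGrp g n k) := Finset.sum_empty
      rw [h, r_zero, Finset.prod_empty]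
    | cons a s ha ih =>
      have h : (∑ i ∈ Finset.cons a s ha, x i) = x a + ∑ i ∈ s, x i := Finset.sum_cons ha
      rw [h, r_add, ih, Finset.prod_cons]
  funext u
  obtain ⟨a, ha⟩ := hsurj u
  have hru : r u = 1 := by
    rw [← ha]
    show r (∑ i, (a i).val • v i) = 1
    rw [r_sum]
    apply Finset.prod_eq_one
    intro i _
    rw [r_nsmul]
    have hi : r (v i) = 1 := by
      show χ₁ (v i) * (χ₂ (v i))⁻¹ = 1
      rw [heq i, mul_inv_cancel]
    rw [hi, one_pow]
  have : χ₁ u * (χ₂ u)⁻¹ = 1 := hru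
  exact mul_inv_eq_one.mp this

/-! Construction of the semicharacter -/

section Construction

variable {N : ℕ} (ψ : KGrp g n k ≃+ KGrp g n k) (v : Fin N → KGrp g n k)

/-- scaled basis vectors -/
def Wm (a : Fin N → ZMod n) (i : Fin N) : KGrp g n k := (a i).val • v i

/-- diagonal part of the candidate semicharacter, on coefficients -/
def Phi (t c : Fin N → kˣ) (a : Fin N → ZMod n) : kˣ :=
  ∏ i, t i ^ (a i).val * c i ^ ((a i).val.choose 2)

/-- off-diagonal part of the candidate semicharacter, on coefficients -/
def Lf (a : Fin N → ZMod n) : kˣ :=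
  ∏ p ∈ Tlt N, Fc (⇑ψ) (Wm v a p.1) (Wm v a p.2)

lemma Wm_add [NeZero n] (a b : Fin N → ZMod n) (i : Fin N) :
    Wm v (a + b) i = Wm v a i + Wm v b i := by
  show ((a + b) i).val • v i = (a i).val • v i + (b i).val • v i
  have h1 : (a + b) i = a i + b i := rfl
  rw [h1, ZMod.val_add, smul_mod]
  exact add_nsmul (v i) _ _

lemma Phi_cocycle [NeZero n] {t c : Fin N → kˣ} (hc : ∀ i, c i ^ n = 1)
    (ht : ∀ i, t i ^ n = c i ^ n.choose 2) (hFc : ∀ i, Fc (⇑ψ) (v i) (v i) = c i)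
    (a b : Fin N → ZMod n) :
    Phi t c (a + b) = Phi t c a * Phi t c b * ∏ i, Fc (⇑ψ) (Wm v a i) (Wm v b i) := by
  unfold Phi
  rw [← Finset.prod_mul_distrib, ← Finset.prod_mul_distrib]
  apply Finset.prod_congr rfl
  intro i _
  have hWF : Fc (⇑ψ) (Wm v a i) (Wm v b i) = c i ^ ((a i).val * (b i).val) := by
    show Fc (⇑ψ) ((a i).val • v i) ((b i).val • v i) = _
    rw [Fc_nsmul_left, Fc_nsmul_right, ← pow_mul, mul_comm ((b i).val), hFc]
  rw [hWF]
  have h1 : (a + b) i = a i + b i := rfl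
  rw [h1]
  exact phi_cocycle (hc i) (ht i) (a i) (b i)

lemma Lf_cocycle [NeZero n] (a b : Fin N → ZMod n) :
    Lf ψ v (a + b) = Lf ψ v a * Lf ψ v b *
      ((∏ p ∈ Tlt N, Fc (⇑ψ) (Wm v a p.1) (Wm v b p.2)) *
        ∏ p ∈ Tlt N, Fc (⇑ψ) (Wm v b p.1) (Wm v a p.2)) := by
  unfold Lf
  rw [← Finset.prod_mul_distrib, ← Finset.prod_mul_distrib, ← Finset.prod_mul_distrib]
  apply Finset.prod_congr rfl
  intro p _
  rw [Wm_add, Wm_add, Fc_add_left, Fc_add_right, Fc_add_right]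
  generalize Fc (⇑ψ) (Wm v a p.1) (Wm v a p.2) = Faa
  generalize Fc (⇑ψ) (Wm v a p.1) (Wm v b p.2) = Fab
  generalize Fc (⇑ψ) (Wm v b p.1) (Wm v a p.2) = Fba
  generalize Fc (⇑ψ) (Wm v b p.1) (Wm v b p.2) = Fbb
  rw [mul_comm Fba Fbb, mul_mul_mul_comm]

end Construction

section Values

variable {N : ℕ} (ψ : KGrp g n k ≃+ KGrp g n k) (v : Fin N → KGrp g n k)

lemma one_val_smul (hn : 1 ≤ n) (x : KGrp g n k) : (1 : ZMod n).val • x = x := by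
  by_cases h1 : n = 1
  · have hx : x = 0 := by
      subst h1
      refine Prod.ext ?_ ?_
      · funext j
        exact Subsingleton.elim _ _
      · refine DFunLike.ext _ _ fun y => ?_
        have hy : y = 0 := by funext j; exact Subsingleton.elim _ _
        rw [hy]
        rw [AddChar.map_zero_eq_one]
        rfl
    rw [hx]
    exact nsmul_zero (M := KGrp g n k) _
  · rw [ZMod.val_one'' h1]
    exact one_nsmul x

lemma A_single [NeZero n] (hn : 1 ≤ n) (i : Fin N) :
    ∑ j, (((Pi.single i 1 : Fin N → ZMod n)) j).val • v j = v i := by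
  rw [Finset.sum_eq_single i]
  · rw [Pi.single_eq_same]
    exact one_val_smul hn (v i)
  · intro j _ hj
    rw [Pi.single_eq_of_ne hj, ZMod.val_zero]
    exact zero_nsmul (v j)
  · intro h; exact absurd (Finset.mem_univ i) h

lemma Phi_single [NeZero n] (hn : 1 ≤ n) {t c : Fin N → kˣ}
    (ht : ∀ i, t i ^ n = c i ^ n.choose 2) (i : Fin N) :
    Phi t c (Pi.single i 1 : Fin N → ZMod n) = t i := by
  unfold Phi
  rw [Finset.prod_eq_single i]
  · rw [Pi.single_eq_same]
    by_cases h1 : n = 1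
    · have hv0 : (1 : ZMod n).val = 0 := by
        have := ZMod.val_lt (1 : ZMod n)
        omega
      have hti : t i = 1 := by
        have := ht i
        rw [h1] at this
        rw [pow_one] at this
        rw [this]
        norm_num
      rw [hv0, hti]
      norm_num
    · rw [ZMod.val_one'' h1, pow_one]
      have : Nat.choose 1 2 = 0 := rfl
      rw [this, pow_zero, mul_one]
  · intro j _ hj
    rw [Pi.single_eq_of_ne hj, ZMod.val_zero, pow_zero]
    have : Nat.choose 0 2 = 0 := rfl
    rw [this, pow_zero, mul_one]
  · intro h; exact absurd (Finset.mem_univ i) h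

lemma Lf_single [NeZero n] (i : Fin N) : Lf ψ v (Pi.single i 1 : Fin N → ZMod n) = 1 := by
  unfold Lf
  apply Finset.prod_eq_one
  intro p hp
  have hlt : p.1 < p.2 := (Finset.mem_filter.mp hp).2
  have hW : ∀ j, j ≠ i → Wm v (Pi.single i 1 : Fin N → ZMod n) j = (0 : KGrp g n k) := by
    intro j hj
    show (((Pi.single i 1 : Fin N → ZMod n)) j).val • v j = (0 : KGrp g n k)
    rw [Pi.single_eq_of_ne hj, ZMod.val_zero]
    exact zero_nsmul (v j)
  by_cases hpi : p.1 = i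
  · have hp2 : p.2 ≠ i := by rw [← hpi]; exact ne_of_gt hlt
    rw [hW p.2 hp2]
    exact Fc_zero_right ψ _
  · rw [hW p.1 hpi]
    exact Fc_zero_left ψ _

lemma Fc_double_sum (x y : Fin N → KGrp g n k) :
    Fc (⇑ψ) (∑ i, x i) (∑ j, y j) = ∏ i, ∏ j, Fc (⇑ψ) (x i) (y j) := by
  rw [Fc_sum_left]
  apply Finset.prod_congr rfl
  intro i _
  rw [Fc_sum_right]

end Values

/-- existence and uniqueness of a `ψ̄`-semi-character with prescribed
values `t k` on a `ℤ/nℤ`-basis `v` of `K(n)`, and the necessary condition satisfied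
by the values of any `ψ̄`-semi-character. -/
theorem semichar_exists_unique_iff (g n : ℕ) (hg : 1 ≤ g) (hn : 1 ≤ n)
    (k : Type*) [Field k] (ζ : k) (hζ : IsPrimitiveRoot ζ n) (hchar : (n : k) ≠ 0)
    (ψ : KGrp g n k ≃+ KGrp g n k) (hψ : IsSymplectic ψ)
    (v : Fin (2 * g) → KGrp g n k)
    (hbasis : Function.Bijective fun a : Fin (2 * g) → ZMod n => ∑ i, (a i).val • v i)
    (t : Fin (2 * g) → kˣ) :
    ((∃! χ : KGrp g n k → kˣ, IsSemiChar (⇑ψ) χ ∧ ∀ i, χ (v i) = t i) ↔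
      (∀ i, t i ^ n =
        if Even n then ((ψ (v i)).2 (ψ (v i)).1 * (v i).2 (v i).1) ^ (n / 2) else 1)) ∧
    (∀ χ : KGrp g n k → kˣ, IsSemiChar (⇑ψ) χ → ∀ i,
      χ (v i) ^ n =
        if Even n then ((ψ (v i)).2 (ψ (v i)).1 * (v i).2 (v i).1) ^ (n / 2) else 1) := by
  haveI : NeZero n := ⟨by omega⟩
  have necess : ∀ χ : KGrp g n k → kˣ, IsSemiChar (⇑ψ) χ → ∀ i,
      χ (v i) ^ n =
        if Even n then ((ψ (v i)).2 (ψ (v i)).1 * (v i).2 (v i).1) ^ (n / 2) else 1 :=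
    fun χ hχ i => semi_values hχ (v i)
  refine ⟨⟨?_, ?_⟩, necess⟩
  · rintro ⟨χ, ⟨hχ, hval⟩, -⟩ i
    rw [← hval i]
    exact necess χ hχ i
  · intro hcond
    set c : Fin (2 * g) → kˣ := fun i => Fc (⇑ψ) (v i) (v i) with hc_def
    have hcn : ∀ i, c i ^ n = 1 := fun i => Fc_pow_n ψ (v i) (v i)
    have ht : ∀ i, t i ^ n = c i ^ n.choose 2 := by
      intro i
      have h2 := cond_eq (n := n) (P1_pow_n (ψ (v i)) (ψ (v i))) (P1_pow_n (v i) (v i))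
      exact (hcond i).trans h2
    set e : (Fin (2 * g) → ZMod n) ≃ KGrp g n k := Equiv.ofBijective _ hbasis with he_def
    have hAe : ∀ u : KGrp g n k, (∑ i, ((e.symm u) i).val • v i) = u := fun u =>
      e.apply_symm_apply u
    have hA_add : ∀ a b : Fin (2 * g) → ZMod n,
        (∑ i, ((a + b) i).val • v i) = (∑ i, (a i).val • v i) + (∑ i, (b i).val • v i) := by
      intro a b
      calc (∑ i, ((a + b) i).val • v i)
          = ∑ i, ((a i).val • v i + (b i).val • v i) :=
            Finset.sum_congr rfl (fun i _ => Wm_add v a b i)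
        _ = _ := Finset.sum_add_distrib
    have hes_add : ∀ u w : KGrp g n k, e.symm (u + w) = e.symm u + e.symm w := by
      intro u w
      apply hbasis.injective
      show (∑ i, ((e.symm (u + w)) i).val • v i)
        = ∑ i, ((e.symm u + e.symm w) i).val • v i
      rw [hAe (u + w), hA_add, hAe u, hAe w]
    set χ : KGrp g n k → kˣ := fun u => Phi t c (e.symm u) * Lf ψ v (e.symm u) with hχ_def
    have hsemi : IsSemiChar (⇑ψ) χ := by
      intro u w
      have key : χ (u + w) = χ u * χ w * Fc (⇑ψ) u w := by
        show Phi t c (e.symm (u + w)) * Lf ψ v (e.symm (u + w)) = _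
        rw [hes_add]
        have hFuw : Fc (⇑ψ) u w =
            ∏ i, ∏ j, Fc (⇑ψ) (Wm v (e.symm u) i) (Wm v (e.symm w) j) := by
          conv_lhs => rw [← hAe u, ← hAe w]
          exact Fc_double_sum ψ (fun i => ((e.symm u) i).val • v i)
            (fun j => ((e.symm w) j).val • v j)
        have hsq := square_split (2 * g)
          (fun i j => Fc (⇑ψ) (Wm v (e.symm u) i) (Wm v (e.symm w) j))
        beta_reduce at hsq
        have hswap : (∏ p ∈ Tlt (2 * g), Fc (⇑ψ) (Wm v (e.symm u) p.2) (Wm v (e.symm w) p.1))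
            = ∏ p ∈ Tlt (2 * g), Fc (⇑ψ) (Wm v (e.symm w) p.1) (Wm v (e.symm u) p.2) :=
          Finset.prod_congr rfl (fun p _ => Fc_symm ψ hψ _ _)
        rw [Phi_cocycle ψ v hcn ht (fun i => rfl) (e.symm u) (e.symm w),
          Lf_cocycle ψ v (e.symm u) (e.symm w)]
        show _ = Phi t c (e.symm u) * Lf ψ v (e.symm u) *
          (Phi t c (e.symm w) * Lf ψ v (e.symm w)) * Fc (⇑ψ) u w
        rw [hFuw, hsq, hswap]
        generalize Phi t c (e.symm u) = Pa
        generalize Phi t c (e.symm w) = Pb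
        generalize Lf ψ v (e.symm u) = La
        generalize Lf ψ v (e.symm w) = Lb
        generalize (∏ i, Fc (⇑ψ) (Wm v (e.symm u) i) (Wm v (e.symm w) i)) = D
        generalize (∏ p ∈ Tlt (2 * g), Fc (⇑ψ) (Wm v (e.symm u) p.1) (Wm v (e.symm w) p.2)) = X
        generalize (∏ p ∈ Tlt (2 * g), Fc (⇑ψ) (Wm v (e.symm w) p.1) (Wm v (e.symm u) p.2)) = Y
        simp only [mul_comm, mul_left_comm, mul_assoc]
      rw [key]
      show χ u * χ w * (P1 (ψ u) (ψ w) * (P1 u w)⁻¹)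
        = χ u * χ w * (ψ w).2 (ψ u).1 * ((w.2 u.1)⁻¹ : kˣ)
      exact (mul_assoc _ _ _).symm
    have hval : ∀ i, χ (v i) = t i := by
      intro i
      have hsingle : e.symm (v i) = (Pi.single i 1 : Fin (2 * g) → ZMod n) := by
        apply hbasis.injective
        show (∑ j, ((e.symm (v i)) j).val • v j)
          = ∑ j, ((Pi.single i 1 : Fin (2 * g) → ZMod n) j).val • v j
        rw [hAe (v i), A_single v hn i]
      show Phi t c (e.symm (v i)) * Lf ψ v (e.symm (v i)) = t i
      rw [hsingle, Phi_single hn ht i, Lf_single ψ v i, mul_one]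
    exact ⟨χ, ⟨hsemi, hval⟩, fun χ' h' =>
      semi_unique h'.1 hsemi hbasis.surjective (fun i => by rw [h'.2 i, hval i])⟩



end ThetaPaper
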